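/- In the name universe over any complete Heyting algebra A, the name-valued equality is an A-valued equivalence: for all A-names u, v, w one has ‖u ≈ u‖ = 1, ‖u ≈ v‖ = ‖v ≈ u‖, and ‖u ≈ v‖ ⊓ ‖v ≈ w‖ ≤ ‖u ≈ w‖. -/

import Mathlib

universe u

namespace Ordinal

/-- Natural addition of ordinals (as in the older Mathlib, where it was `Ordinal.nadd`). -/
noncomputable def nadd (a b : Ordinal.{u}) : Ordinal.{u} :=
  max (blsub.{u, u} a fun a' _ => nadd a' b) (blsub.{u, u} b fun b' _ => nadd a b')
termination_by (a, b)
decreasing_by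
  · exact Prod.Lex.left _ _ (by assumption)
  · exact Prod.Lex.right _ (by assumption)

infixl:65 " ♯ " => Ordinal.nadd

theorem nadd_def (a b : Ordinal.{u}) :
    a ♯ b = max (blsub.{u, u} a fun a' _ => a' ♯ b) (blsub.{u, u} b fun b' _ => a ♯ b') := by
  rw [nadd]

theorem nadd_lt_nadd_left {b c : Ordinal.{u}} (h : b < c) (a : Ordinal.{u}) : a ♯ b < a ♯ c := by
  rw [nadd_def a c]
  exact lt_of_lt_of_le (lt_blsub.{u, u} (fun b' _ => a ♯ b') b h) (le_max_right _ _)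

theorem nadd_comm (a b : Ordinal.{u}) : a ♯ b = b ♯ a := by
  rw [nadd_def, nadd_def, max_comm]
  congr 1
  · congr 1; funext b' h; exact nadd_comm a b'
  · congr 1; funext a' h; exact nadd_comm a' b
termination_by (a, b)
decreasing_by
  · exact Prod.Lex.right _ (by assumption)
  · exact Prod.Lex.left _ _ (by assumption)

theorem nadd_le_nadd_left {b c : Ordinal.{u}} (h : b ≤ c) (a : Ordinal.{u}) : a ♯ b ≤ a ♯ c := by
  rcases lt_or_eq_of_le h with (h | rfl)
  · exact (nadd_lt_nadd_left h a).le
  · exact le_rfl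

theorem nadd_le_nadd_right {b c : Ordinal.{u}} (h : b ≤ c) (a : Ordinal.{u}) : b ♯ a ≤ c ♯ a := by
  rw [nadd_comm b a, nadd_comm c a]
  exact nadd_le_nadd_left h a

theorem nadd_lt_nadd_right {b c : Ordinal.{u}} (h : b < c) (a : Ordinal.{u}) : b ♯ a < c ♯ a := by
  rw [nadd_comm b a, nadd_comm c a]
  exact nadd_lt_nadd_left h a

theorem lt_nadd_iff {a b x : Ordinal.{u}} :
    x < a ♯ b ↔ (∃ a' < a, x ≤ a' ♯ b) ∨ (∃ b' < b, x ≤ a ♯ b') := by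
  rw [nadd_def, lt_max_iff, lt_blsub_iff, lt_blsub_iff]
  simp only [exists_prop]

theorem nadd_assoc (a b c : Ordinal.{u}) : a ♯ b ♯ c = a ♯ (b ♯ c) := by
  apply le_antisymm
  · rw [nadd_def (a ♯ b) c]
    refine max_le (blsub_le fun x hx => ?_) (blsub_le fun c' hc => ?_)
    · rcases lt_nadd_iff.1 hx with ⟨a', ha, hx'⟩ | ⟨b', hb, hx'⟩
      · calc x ♯ c ≤ a' ♯ b ♯ c := nadd_le_nadd_right hx' c
          _ = a' ♯ (b ♯ c) := nadd_assoc a' b c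
          _ < a ♯ (b ♯ c) := nadd_lt_nadd_right ha _
      · calc x ♯ c ≤ a ♯ b' ♯ c := nadd_le_nadd_right hx' c
          _ = a ♯ (b' ♯ c) := nadd_assoc a b' c
          _ < a ♯ (b ♯ c) := nadd_lt_nadd_left (nadd_lt_nadd_right hb c) a
    · calc a ♯ b ♯ c' = a ♯ (b ♯ c') := nadd_assoc a b c'
        _ < a ♯ (b ♯ c) := nadd_lt_nadd_left (nadd_lt_nadd_left hc b) a
  · rw [nadd_def a (b ♯ c)]
    refine max_le (blsub_le fun a' ha => ?_) (blsub_le fun y hy => ?_)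
    · calc a' ♯ (b ♯ c) = a' ♯ b ♯ c := (nadd_assoc a' b c).symm
        _ < a ♯ b ♯ c := nadd_lt_nadd_right (nadd_lt_nadd_right ha b) c
    · rcases lt_nadd_iff.1 hy with ⟨b', hb, hy'⟩ | ⟨c', hc, hy'⟩
      · calc a ♯ y ≤ a ♯ (b' ♯ c) := nadd_le_nadd_left hy' a
          _ = a ♯ b' ♯ c := (nadd_assoc a b' c).symm
          _ < a ♯ b ♯ c := nadd_lt_nadd_right (nadd_lt_nadd_left hb a) c
      · calc a ♯ y ≤ a ♯ (b ♯ c') := nadd_le_nadd_left hy' a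
          _ = a ♯ b ♯ c' := (nadd_assoc a b c').symm
          _ < a ♯ b ♯ c := nadd_lt_nadd_left hc _
termination_by (a, b, c)
decreasing_by
  all_goals first
    | exact Prod.Lex.left _ _ (by assumption)
    | exact Prod.Lex.right _ (Prod.Lex.left _ _ (by assumption))
    | exact Prod.Lex.right _ (Prod.Lex.right _ (by assumption))

end Ordinal

/-- The universe `V^A` of `A`-names over a complete Heyting algebra `A`:
an `A`-name is a function from a set (of previously constructed `A`-names)
into `A`, here encoded by an indexing type `ι`, a family `elts` of names and
the family `val` of their attached truth values. -/
inductive HName (A : Type u) : Type (u + 1) where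
  | mk (ι : Type u) (elts : ι → HName A) (val : ι → A)

namespace HName

variable {A : Type u}

/-- The indexing type of (the domain of) a name. -/
def ι : HName A → Type u
  | mk ι _ _ => ι

/-- The members of (the domain of) a name. -/
def elts : (u : HName A) → u.ι → HName A
  | mk _ e _ => e

/-- The values attached by a name to the members of its domain. -/
def val : (u : HName A) → u.ι → A
  | mk _ _ v => v

/-- Ordinal rank of a name (used for the recursive definition of truth values). -/
noncomputable def rank : HName A → Ordinal.{u}
  | mk _ e _ => Ordinal.lsub fun i => (e i).rank

theorem rank_lt {ι : Type u} (e : ι → HName A) (v : ι → A) (i : ι) :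
    (e i).rank < (mk ι e v).rank := Ordinal.lt_lsub _ i

variable [Order.Frame A]

/-- The truth value `‖u ≈ v‖` of equality of two names, defined by the recursion
`‖u ≈ v‖ = ⨅_{x ∈ dom u} (u(x) ⇨ ‖x ∈ v‖) ⊓ ⨅_{y ∈ dom v} (v(y) ⇨ ‖y ∈ u‖)`,
where `‖x ∈ v‖ = ⨆_{y ∈ dom v} (v(y) ⊓ ‖y ≈ x‖)` is inlined. -/
noncomputable def eqVal : HName A → HName A → A
  | mk ι e a, mk κ f b =>
      (⨅ i, a i ⇨ ⨆ j, b j ⊓ eqVal (f j) (e i)) ⊓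
      (⨅ j, b j ⇨ ⨆ i, a i ⊓ eqVal (e i) (f j))
termination_by u v => u.rank ♯ v.rank
decreasing_by
  · calc rank (f j) ♯ rank (e i) < rank (f j) ♯ rank (mk ι e a) :=
          Ordinal.nadd_lt_nadd_left (rank_lt e a i) _
      _ ≤ rank (mk κ f b) ♯ rank (mk ι e a) :=
          Ordinal.nadd_le_nadd_right (le_of_lt (rank_lt f b j)) _
      _ = rank (mk ι e a) ♯ rank (mk κ f b) := Ordinal.nadd_comm _ _
  · calc rank (e i) ♯ rank (f j) < rank (e i) ♯ rank (mk κ f b) :=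
          Ordinal.nadd_lt_nadd_left (rank_lt f b j) _
      _ ≤ rank (mk ι e a) ♯ rank (mk κ f b) :=
          Ordinal.nadd_le_nadd_right (le_of_lt (rank_lt e a i)) _

/-- The truth value `‖u ∈ v‖ = ⨆_{x ∈ dom v} (v(x) ⊓ ‖x ≈ u‖)` of membership. -/
noncomputable def memVal (u v : HName A) : A :=
  ⨆ j : v.ι, v.val j ⊓ eqVal (v.elts j) u

theorem eqVal_symm : ∀ (u v : HName A), eqVal u v = eqVal v u
  | mk ι e a, mk κ f b => by rw [eqVal, eqVal, inf_comm]

theorem eqVal_refl : ∀ (u : HName A), eqVal u u = ⊤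
  | mk ι e a => by
    have h : ∀ i, a i ≤ ⨆ j, a j ⊓ eqVal (e j) (e i) := fun i =>
      le_iSup_of_le i (by rw [eqVal_refl (e i)]; simp)
    rw [eqVal]
    simp only [inf_eq_top_iff, iInf_eq_top, himp_eq_top_iff]
    exact ⟨h, h⟩
termination_by u => u.rank
decreasing_by exact rank_lt e a i

mutual

theorem eqVal_trans : ∀ (u v w : HName A), eqVal u v ⊓ eqVal v w ≤ eqVal u w
  | mk ι e a, mk κ f b, mk μ g c => by
    conv_rhs => rw [eqVal]
    refine le_inf (le_iInf fun i => le_himp_iff.2 ?_) (le_iInf fun k => le_himp_iff.2 ?_)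
    · have h1 : eqVal (mk ι e a) (mk κ f b) ⊓ a i ≤
          memVal (e i) (mk κ f b) := by
        rw [eqVal]
        exact le_himp_iff.1 (inf_le_left.trans (iInf_le _ i))
      calc eqVal (mk ι e a) (mk κ f b) ⊓ eqVal (mk κ f b) (mk μ g c) ⊓ a i
          ≤ memVal (e i) (mk κ f b) ⊓ eqVal (mk κ f b) (mk μ g c) := by
            rw [inf_right_comm]
            exact inf_le_inf_right _ h1
        _ ≤ memVal (e i) (mk μ g c) := by
            rw [inf_comm]
            exact eqVal_memVal (mk κ f b) (mk μ g c) (e i)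
    · have h1 : eqVal (mk κ f b) (mk μ g c) ⊓ c k ≤
          memVal (g k) (mk κ f b) := by
        rw [eqVal]
        exact le_himp_iff.1 (inf_le_right.trans (iInf_le _ k))
      calc eqVal (mk ι e a) (mk κ f b) ⊓ eqVal (mk κ f b) (mk μ g c) ⊓ c k
          ≤ eqVal (mk ι e a) (mk κ f b) ⊓ memVal (g k) (mk κ f b) := by
            rw [inf_assoc]
            exact inf_le_inf_left _ h1
        _ ≤ memVal (g k) (mk ι e a) := by
            rw [eqVal_symm]
            exact eqVal_memVal (mk κ f b) (mk ι e a) (g k)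
termination_by u v w => u.rank ♯ v.rank ♯ w.rank
decreasing_by
  · calc rank (mk κ f b) ♯ rank (mk μ g c) ♯ rank (e i)
        < rank (mk κ f b) ♯ rank (mk μ g c) ♯ rank (mk ι e a) :=
          Ordinal.nadd_lt_nadd_left (rank_lt e a i) _
      _ = rank (mk ι e a) ♯ rank (mk κ f b) ♯ rank (mk μ g c) := by
          rw [Ordinal.nadd_comm, Ordinal.nadd_assoc]
  · calc rank (mk κ f b) ♯ rank (mk ι e a) ♯ rank (g k)
        < rank (mk κ f b) ♯ rank (mk ι e a) ♯ rank (mk μ g c) :=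
          Ordinal.nadd_lt_nadd_left (rank_lt g c k) _
      _ = rank (mk ι e a) ♯ rank (mk κ f b) ♯ rank (mk μ g c) := by
          rw [Ordinal.nadd_comm (rank (mk κ f b)) (rank (mk ι e a))]

theorem eqVal_memVal : ∀ (v w t : HName A), eqVal v w ⊓ memVal t v ≤ memVal t w
  | mk κ f b, mk μ g c, t => by
    show eqVal (mk κ f b) (mk μ g c) ⊓ (⨆ j, b j ⊓ eqVal (f j) t) ≤ _
    rw [inf_iSup_eq]
    refine iSup_le fun j => ?_
    have h1 : eqVal (mk κ f b) (mk μ g c) ⊓ b j ≤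
        ⨆ k, c k ⊓ eqVal (g k) (f j) := by
      rw [eqVal]
      exact le_himp_iff.1 (inf_le_left.trans (iInf_le _ j))
    calc eqVal (mk κ f b) (mk μ g c) ⊓ (b j ⊓ eqVal (f j) t)
        ≤ (⨆ k, c k ⊓ eqVal (g k) (f j)) ⊓ eqVal (f j) t := by
          rw [← inf_assoc]
          exact inf_le_inf_right _ h1
      _ ≤ memVal t (mk μ g c) := by
          rw [iSup_inf_eq]
          refine iSup_le fun k => le_iSup_of_le k ?_
          rw [inf_assoc]
          exact inf_le_inf_left _ (eqVal_trans (g k) (f j) t)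
termination_by v w t => v.rank ♯ w.rank ♯ t.rank
decreasing_by
  · calc rank (g k) ♯ rank (f j) ♯ rank t
        < rank (mk μ g c) ♯ rank (f j) ♯ rank t :=
          Ordinal.nadd_lt_nadd_right
            (Ordinal.nadd_lt_nadd_right (rank_lt g c k) _) _
      _ ≤ rank (mk μ g c) ♯ rank (mk κ f b) ♯ rank t :=
          Ordinal.nadd_le_nadd_right
            (Ordinal.nadd_le_nadd_left (le_of_lt (rank_lt f b j)) _) _
      _ = rank (mk κ f b) ♯ rank (mk μ g c) ♯ rank t := by
          rw [Ordinal.nadd_comm (rank (mk μ g c)) (rank (mk κ f b))]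

end

end HName



open HName in
/-- In the name universe over any complete Heyting algebra `A`, the name-valued
equality is an `A`-valued equivalence: for all `A`-names `u`, `v`, `w`,
`‖u ≈ u‖ = 1`, `‖u ≈ v‖ = ‖v ≈ u‖` and `‖u ≈ v‖ ⊓ ‖v ≈ w‖ ≤ ‖u ≈ w‖`. -/
theorem eqVal_refl_symm_trans {A : Type u} [Order.Frame A] (u v w : HName A) :
    eqVal u u = ⊤ ∧ eqVal u v = eqVal v u ∧ eqVal u v ⊓ eqVal v w ≤ eqVal u w := by
  exact ⟨eqVal_refl u, eqVal_symm u v, eqVal_trans u v w⟩
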